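/- (Lemma 3.2(ii)) Suppose there exists a Hermitian X_P with R_{X_P} positive definite and X_P ≤ R(X_P). If X_⋆ is Hermitian and there exists a Hermitian X_T with R_{X_T} invertible, ρ(T̂_{X_T}) < 1, and C_{T_{X_T}}(X_⋆) ≥ H_{X_T}, then R_{X_⋆} is positive definite and X_⋆ − R(X_⋆) ≥ K(X_T, X_⋆) ≥ 0; in particular X_⋆ ≥ R(X_⋆). -/

import Mathlib

open Matrix Filter Topology
open scoped ComplexOrder

noncomputable section

namespace CDARE

variable {n m : ℕ}

/-- Entrywise complex conjugate of a matrix. -/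
def mconj {p q : ℕ} (M : Matrix (Fin p) (Fin q) ℂ) : Matrix (Fin p) (Fin q) ℂ :=
  M.map (starRingEnd ℂ)

/-- `hatM M = conj M * M`. -/
def hatM (M : Matrix (Fin n) (Fin n) ℂ) : Matrix (Fin n) (Fin n) ℂ := mconj M * M

/-- `R_X = R + Bᴴ X̄ B`. -/
def RX (R : Matrix (Fin m) (Fin m) ℂ) (B : Matrix (Fin n) (Fin m) ℂ)
    (X : Matrix (Fin n) (Fin n) ℂ) : Matrix (Fin m) (Fin m) ℂ :=
  R + Bᴴ * mconj X * B

/-- `F_X = R_X⁻¹ Bᴴ X̄ A`. -/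
def FX (A : Matrix (Fin n) (Fin n) ℂ) (B : Matrix (Fin n) (Fin m) ℂ)
    (R : Matrix (Fin m) (Fin m) ℂ) (X : Matrix (Fin n) (Fin n) ℂ) :
    Matrix (Fin m) (Fin n) ℂ :=
  (RX R B X)⁻¹ * (Bᴴ * mconj X * A)

/-- `T_X = A - B F_X`. -/
def TX (A : Matrix (Fin n) (Fin n) ℂ) (B : Matrix (Fin n) (Fin m) ℂ)
    (R : Matrix (Fin m) (Fin m) ℂ) (X : Matrix (Fin n) (Fin n) ℂ) :
    Matrix (Fin n) (Fin n) ℂ :=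
  A - B * FX A B R X

/-- The Riccati operator `R(X)`. -/
def Rop (A : Matrix (Fin n) (Fin n) ℂ) (B : Matrix (Fin n) (Fin m) ℂ)
    (R : Matrix (Fin m) (Fin m) ℂ) (H : Matrix (Fin n) (Fin n) ℂ)
    (X : Matrix (Fin n) (Fin n) ℂ) : Matrix (Fin n) (Fin n) ℂ :=
  Aᴴ * mconj X * A - Aᴴ * mconj X * B * (RX R B X)⁻¹ * (Bᴴ * mconj X * A) + H

/-- `H_X = H + F_Xᴴ R F_X`. -/
def HX (A : Matrix (Fin n) (Fin n) ℂ) (B : Matrix (Fin n) (Fin m) ℂ)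
    (R : Matrix (Fin m) (Fin m) ℂ) (H : Matrix (Fin n) (Fin n) ℂ)
    (X : Matrix (Fin n) (Fin n) ℂ) : Matrix (Fin n) (Fin n) ℂ :=
  H + (FX A B R X)ᴴ * R * FX A B R X

/-- `K(Y, X) = (F_Y - F_X)ᴴ R_X (F_Y - F_X)`. -/
def Kop (A : Matrix (Fin n) (Fin n) ℂ) (B : Matrix (Fin n) (Fin m) ℂ)
    (R : Matrix (Fin m) (Fin m) ℂ) (Y X : Matrix (Fin n) (Fin n) ℂ) :
    Matrix (Fin n) (Fin n) ℂ :=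
  (FX A B R Y - FX A B R X)ᴴ * RX R B X * (FX A B R Y - FX A B R X)

/-- Conjugate Stein operator `C_C(X) = X - Cᴴ X̄ C`. -/
def CStein (C X : Matrix (Fin n) (Fin n) ℂ) : Matrix (Fin n) (Fin n) ℂ :=
  X - Cᴴ * mconj X * C

/-- The set `S_≥`. -/
def Sge (A : Matrix (Fin n) (Fin n) ℂ) (B : Matrix (Fin n) (Fin m) ℂ)
    (R : Matrix (Fin m) (Fin m) ℂ) (H : Matrix (Fin n) (Fin n) ℂ) :
    Set (Matrix (Fin n) (Fin n) ℂ) :=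
  {X | X.IsHermitian ∧ ∃ XT : Matrix (Fin n) (Fin n) ℂ, XT.IsHermitian ∧
      IsUnit (RX R B XT) ∧ spectralRadius ℂ (hatM (TX A B R XT)) < 1 ∧
      (CStein (TX A B R XT) X - HX A B R H XT).PosSemidef}


open scoped ENNReal NNReal

-- Auxiliary lemmas about entrywise conjugation

lemma mconj_apply {p q : ℕ} (M : Matrix (Fin p) (Fin q) ℂ) (i j) :
    mconj M i j = star (M i j) := rfl

lemma mconj_sub {p q : ℕ} (M N : Matrix (Fin p) (Fin q) ℂ) :
    mconj (M - N) = mconj M - mconj N := by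
  ext i j; simp [mconj_apply, Matrix.sub_apply, star_sub]

lemma mconj_mul {p q r : ℕ} (M : Matrix (Fin p) (Fin q) ℂ) (N : Matrix (Fin q) (Fin r) ℂ) :
    mconj (M * N) = mconj M * mconj N := Matrix.map_mul

lemma mconj_mconj {p q : ℕ} (M : Matrix (Fin p) (Fin q) ℂ) : mconj (mconj M) = M := by
  ext i j; simp [mconj_apply]

lemma mconj_conjTranspose {p q : ℕ} (M : Matrix (Fin p) (Fin q) ℂ) :
    mconj (Mᴴ) = Mᵀ := by
  ext i j; simp [mconj_apply, Matrix.conjTranspose_apply]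

lemma conjTranspose_mconj {p q : ℕ} (M : Matrix (Fin p) (Fin q) ℂ) :
    (mconj M)ᴴ = Mᵀ := by
  ext i j; simp [mconj_apply, Matrix.conjTranspose_apply]

lemma mconj_of_hermitian {p : ℕ} {X : Matrix (Fin p) (Fin p) ℂ} (hX : X.IsHermitian) :
    mconj X = Xᵀ := by
  ext i j
  simp only [mconj_apply, Matrix.transpose_apply]
  exact hX.apply j i

lemma mconj_posSemidef {p : ℕ} {X : Matrix (Fin p) (Fin p) ℂ} (hX : X.PosSemidef) :
    (mconj X).PosSemidef := by
  rw [mconj_of_hermitian hX.isHermitian]; exact hX.transpose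

lemma mconj_hermitian' {p : ℕ} {X : Matrix (Fin p) (Fin p) ℂ} (hX : X.IsHermitian) :
    (mconj X)ᴴ = mconj X := by
  rw [conjTranspose_mconj, mconj_of_hermitian hX]

lemma RX_hermitian {R : Matrix (Fin m) (Fin m) ℂ} {B : Matrix (Fin n) (Fin m) ℂ}
    {X : Matrix (Fin n) (Fin n) ℂ} (hR : R.IsHermitian) (hX : X.IsHermitian) :
    (RX R B X).IsHermitian := by
  have : (mconj X).IsHermitian := by
    rw [Matrix.IsHermitian, mconj_hermitian' hX]
  exact hR.add (isHermitian_conjTranspose_mul_mul B this)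

section Stein

attribute [local instance] Matrix.linftyOpNormedAddCommGroup Matrix.linftyOpNormedRing
  Matrix.linftyOpNormedAlgebra

variable {N : ℕ}

lemma norm_pow_tendsto (M : Matrix (Fin N) (Fin N) ℂ) (h : spectralRadius ℂ M < 1) :
    Tendsto (fun k : ℕ => ‖M ^ k‖) atTop (𝓝 0) := by
  haveI : CompleteSpace (Matrix (Fin N) (Fin N) ℂ) :=
    FiniteDimensional.complete ℂ (Matrix (Fin N) (Fin N) ℂ)
  obtain ⟨r, hr1, hr2⟩ := exists_between h
  lift r to ℝ≥0 using (hr2.trans ENNReal.one_lt_top).ne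
  have hgel := spectrum.pow_nnnorm_pow_one_div_tendsto_nhds_spectralRadius M
  have hev : ∀ᶠ k : ℕ in atTop, (‖M ^ k‖₊ : ℝ≥0∞) ^ (1 / (k : ℝ)) < r :=
    hgel.eventually_lt_const hr1
  have hr1' : (r : ℝ) < 1 := by exact_mod_cast hr2
  apply squeeze_zero' (g := fun k => (r : ℝ) ^ k)
  · exact Eventually.of_forall fun k => norm_nonneg _
  · filter_upwards [hev, eventually_ge_atTop 1] with k hk hk1
    have hk0 : (k : ℝ) ≠ 0 := by positivity
    have hlt : (‖M ^ k‖₊ : ℝ≥0∞) < (r : ℝ≥0∞) ^ (k : ℝ) := by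
      calc (‖M ^ k‖₊ : ℝ≥0∞) = ((‖M ^ k‖₊ : ℝ≥0∞) ^ (1 / (k : ℝ))) ^ (k : ℝ) := by
            rw [← ENNReal.rpow_mul, one_div, inv_mul_cancel₀ hk0, ENNReal.rpow_one]
        _ < (r : ℝ≥0∞) ^ (k : ℝ) := ENNReal.rpow_lt_rpow hk (by positivity)
    rw [ENNReal.rpow_natCast, ← ENNReal.coe_pow, ENNReal.coe_lt_coe] at hlt
    calc ‖M ^ k‖ = ((‖M ^ k‖₊ : ℝ≥0) : ℝ) := rfl
      _ ≤ ((r ^ k : ℝ≥0) : ℝ) := by exact_mod_cast hlt.le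
      _ = (r : ℝ) ^ k := by push_cast; ring
  · exact tendsto_pow_atTop_nhds_zero_of_lt_one r.coe_nonneg hr1'

lemma isClosed_nonneg_complex : IsClosed {z : ℂ | 0 ≤ z} := by
  have : {z : ℂ | 0 ≤ z} = Complex.re ⁻¹' Set.Ici 0 ∩ Complex.im ⁻¹' {0} := by
    ext z
    simp [Complex.le_def, eq_comm]
  rw [this]
  exact (isClosed_Ici.preimage Complex.continuous_re).inter
    (isClosed_singleton.preimage Complex.continuous_im)

lemma stein_lemma (T W : Matrix (Fin N) (Fin N) ℂ) (hW : W.IsHermitian)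
    (hρ : spectralRadius ℂ (hatM T) < 1)
    (h : (W - Tᴴ * mconj W * T).PosSemidef) : W.PosSemidef := by
  classical
  set S : Matrix (Fin N) (Fin N) ℂ → Matrix (Fin N) (Fin N) ℂ :=
    fun P => Tᴴ * mconj P * T with hSdef
  have hSpsd : ∀ P : Matrix (Fin N) (Fin N) ℂ, P.PosSemidef → (S P).PosSemidef := fun P hP =>
    (mconj_posSemidef hP).conjTranspose_mul_mul_same T
  have hSsub : ∀ P Q : Matrix (Fin N) (Fin N) ℂ, S (P - Q) = S P - S Q := by
    intro P Q
    simp [hSdef, mconj_sub, Matrix.mul_sub, Matrix.sub_mul]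
  have hiter : ∀ k, (W - S^[k] W).PosSemidef := by
    intro k
    induction k with
    | zero => simpa using Matrix.PosSemidef.zero
    | succ k ih =>
      have e : W - S^[k+1] W = (W - S W) + S (W - S^[k] W) := by
        rw [hSsub, Function.iterate_succ_apply']
        abel
      rw [e]
      exact h.add (hSpsd _ ih)
  have hSS : ∀ Q : Matrix (Fin N) (Fin N) ℂ, S (S Q) = (hatM T)ᴴ * Q * (hatM T) := by
    intro Q
    simp [hSdef, hatM, mconj_mul, mconj_conjTranspose, mconj_mconj, conjTranspose_mul,
      conjTranspose_mconj, Matrix.mul_assoc]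
  have hpow : ∀ k, S^[2 * k] W = ((hatM T) ^ k)ᴴ * W * (hatM T) ^ k := by
    intro k
    induction k with
    | zero => simp
    | succ k ih =>
      have : 2 * (k + 1) = (2 * k + 1) + 1 := by ring
      rw [this, Function.iterate_succ_apply', Function.iterate_succ_apply', ih, hSS]
      simp [pow_succ, conjTranspose_mul, Matrix.mul_assoc]
  refine Matrix.PosSemidef.of_dotProduct_mulVec_nonneg hW fun x => ?_
  set M : Matrix (Fin N) (Fin N) ℂ := hatM T with hM
  set y : ℕ → (Fin N → ℂ) := fun k => (M ^ k) *ᵥ x with hy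
  set q : ℕ → ℂ := fun k => star (y k) ⬝ᵥ W *ᵥ (y k) with hq
  have hkey : ∀ k, star x ⬝ᵥ (S^[2 * k] W) *ᵥ x = q k := by
    intro k
    rw [hpow k, hq]
    simp only [hy]
    rw [← Matrix.mulVec_mulVec, ← Matrix.mulVec_mulVec, Matrix.dotProduct_mulVec,
      ← Matrix.star_mulVec]
  have hdecomp : ∀ k, star x ⬝ᵥ W *ᵥ x - q k = star x ⬝ᵥ (W - S^[2 * k] W) *ᵥ x := by
    intro k
    rw [Matrix.sub_mulVec, dotProduct_sub, hkey k]
  have hynorm : ∀ k, ‖y k‖ ≤ ‖M ^ k‖ * ‖x‖ := fun k => Matrix.linfty_opNorm_mulVec _ _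
  have hqbound : ∀ k, ‖q k‖ ≤ (N : ℝ) * ‖W‖ * (‖M ^ k‖ * ‖x‖) * (‖M ^ k‖ * ‖x‖) := by
    intro k
    have hdot : ‖q k‖ ≤ ∑ i : Fin N, ‖star (y k) i‖ * ‖(W *ᵥ y k) i‖ := by
      rw [hq]
      refine (norm_sum_le _ _).trans ?_
      exact Finset.sum_le_sum fun i _ => norm_mul_le _ _
    have hterm : ∀ i : Fin N, ‖star (y k) i‖ * ‖(W *ᵥ y k) i‖ ≤ ‖y k‖ * (‖W‖ * ‖y k‖) := by
      intro i
      have h1 : ‖star (y k) i‖ ≤ ‖y k‖ := by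
        have := norm_le_pi_norm (star (y k)) i
        simpa [Pi.star_apply, norm_star] using this
      have h2 : ‖(W *ᵥ y k) i‖ ≤ ‖W‖ * ‖y k‖ := by
        refine (norm_le_pi_norm (W *ᵥ y k) i).trans ?_
        exact Matrix.linfty_opNorm_mulVec _ _
      exact mul_le_mul h1 h2 (norm_nonneg _) (norm_nonneg _)
    have hstep : ‖q k‖ ≤ (N : ℝ) * (‖y k‖ * (‖W‖ * ‖y k‖)) := by
      refine hdot.trans ?_
      calc ∑ i : Fin N, ‖star (y k) i‖ * ‖(W *ᵥ y k) i‖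
          ≤ ∑ _i : Fin N, ‖y k‖ * (‖W‖ * ‖y k‖) := Finset.sum_le_sum fun i _ => hterm i
        _ = (N : ℝ) * (‖y k‖ * (‖W‖ * ‖y k‖)) := by simp [mul_comm]
    refine hstep.trans ?_
    have hWnn : (0:ℝ) ≤ ‖W‖ := norm_nonneg _
    have hMx : (0:ℝ) ≤ ‖M ^ k‖ * ‖x‖ := by positivity
    have hyk := hynorm k
    have hynn : (0:ℝ) ≤ ‖y k‖ := norm_nonneg _
    calc (N : ℝ) * (‖y k‖ * (‖W‖ * ‖y k‖))
        ≤ (N : ℝ) * ((‖M ^ k‖ * ‖x‖) * (‖W‖ * (‖M ^ k‖ * ‖x‖))) := by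
          have hmm : ‖y k‖ * (‖W‖ * ‖y k‖) ≤ (‖M ^ k‖ * ‖x‖) * (‖W‖ * (‖M ^ k‖ * ‖x‖)) :=
            mul_le_mul hyk (mul_le_mul le_rfl hyk hynn hWnn) (by positivity) hMx
          exact mul_le_mul_of_nonneg_left hmm (by positivity)
      _ = (N : ℝ) * ‖W‖ * (‖M ^ k‖ * ‖x‖) * (‖M ^ k‖ * ‖x‖) := by ring
  have hMpow := norm_pow_tendsto M (by rwa [hM])
  have hgz : Tendsto (fun k => (N : ℝ) * ‖W‖ * (‖M ^ k‖ * ‖x‖) * (‖M ^ k‖ * ‖x‖)) atTop (𝓝 0) := by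
    have h1 : Tendsto (fun k => ‖M ^ k‖ * ‖x‖) atTop (𝓝 0) := by
      simpa using hMpow.mul_const ‖x‖
    have := ((h1.const_mul ((N : ℝ) * ‖W‖)).mul h1)
    simpa [mul_assoc] using this
  have hq0 : Tendsto q atTop (𝓝 0) := by
    rw [tendsto_zero_iff_norm_tendsto_zero]
    exact squeeze_zero (fun k => norm_nonneg _) hqbound hgz
  have hlim : Tendsto (fun k => star x ⬝ᵥ W *ᵥ x - q k) atTop (𝓝 (star x ⬝ᵥ W *ᵥ x)) := by
    simpa using tendsto_const_nhds.sub hq0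
  have hmem : star x ⬝ᵥ W *ᵥ x ∈ {z : ℂ | 0 ≤ z} :=
    isClosed_nonneg_complex.mem_of_tendsto hlim
      (Eventually.of_forall fun k => by
        rw [Set.mem_setOf_eq, hdecomp k]
        exact (hiter (2 * k)).dotProduct_mulVec_nonneg x)
  exact hmem

end Stein

/-- generic expansion of a quadratic congruence of a difference -/
lemma expand_quad {p q : ℕ} (U V : Matrix (Fin p) (Fin q) ℂ) (Y : Matrix (Fin p) (Fin p) ℂ) :
    (U - V)ᴴ * Y * (U - V) =
      Uᴴ * Y * U - Uᴴ * Y * V - Vᴴ * Y * U + Vᴴ * Y * V := by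
  simp only [conjTranspose_sub, Matrix.sub_mul, Matrix.mul_sub]
  abel

/-- The fundamental completion-of-squares identity. -/
lemma key_identity (A : Matrix (Fin n) (Fin n) ℂ) (B : Matrix (Fin n) (Fin m) ℂ)
    (R : Matrix (Fin m) (Fin m) ℂ) (H : Matrix (Fin n) (Fin n) ℂ)
    (X Y : Matrix (Fin n) (Fin n) ℂ) (hR : R.IsHermitian) (hY : Y.IsHermitian)
    (hRY : IsUnit (RX R B Y)) :
    (TX A B R X)ᴴ * mconj Y * (TX A B R X) + HX A B R H X =
      Rop A B R H Y + (FX A B R X - FX A B R Y)ᴴ * RX R B Y * (FX A B R X - FX A B R Y) := by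
  set S : Matrix (Fin m) (Fin m) ℂ := RX R B Y with hS
  set F : Matrix (Fin m) (Fin n) ℂ := FX A B R Y with hF
  set Fx : Matrix (Fin m) (Fin n) ℂ := FX A B R X with hFx
  set Yc : Matrix (Fin n) (Fin n) ℂ := mconj Y with hYc
  have hdet : IsUnit S.det := (Matrix.isUnit_iff_isUnit_det S).mp hRY
  have hSinv : S * S⁻¹ = 1 := Matrix.mul_nonsing_inv S hdet
  have hinvS : S⁻¹ * S = 1 := Matrix.nonsing_inv_mul S hdet
  have hSH : Sᴴ = S := RX_hermitian hR hY
  have hYcH : Ycᴴ = Yc := mconj_hermitian' hY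
  have hG : Bᴴ * Yc * A = S * F := by
    rw [hF, FX, ← Matrix.mul_assoc, hSinv, Matrix.one_mul]
  have hGT : Aᴴ * Yc * B = Fᴴ * S := by
    have := congrArg conjTranspose hG
    rw [conjTranspose_mul, conjTranspose_mul, conjTranspose_mul, conjTranspose_conjTranspose,
      hYcH, hSH] at this
    rw [← Matrix.mul_assoc] at this
    exact this
  have hBB : Bᴴ * Yc * B = S - R := by
    rw [hS, RX, hYc]; abel
  have e1 : Aᴴ * Yc * (B * Fx) = Fᴴ * S * Fx := by
    rw [← Matrix.mul_assoc, hGT]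
  have e2 : (B * Fx)ᴴ * Yc * A = Fxᴴ * S * F := by
    rw [conjTranspose_mul, Matrix.mul_assoc Fxᴴ Bᴴ Yc, Matrix.mul_assoc Fxᴴ (Bᴴ * Yc) A,
      hG, ← Matrix.mul_assoc]
  have e3 : (B * Fx)ᴴ * Yc * (B * Fx) = Fxᴴ * S * Fx - Fxᴴ * R * Fx := by
    rw [conjTranspose_mul, Matrix.mul_assoc Fxᴴ Bᴴ Yc, ← Matrix.mul_assoc (Fxᴴ * (Bᴴ * Yc)) B Fx,
      Matrix.mul_assoc Fxᴴ (Bᴴ * Yc) B, hBB, Matrix.mul_sub, Matrix.sub_mul]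
  have eR : Rop A B R H Y = Aᴴ * Yc * A - Fᴴ * S * F + H := by
    rw [Rop, ← hYc, ← hS, hGT, hG, Matrix.mul_assoc Fᴴ S S⁻¹, hSinv, Matrix.mul_one,
      ← Matrix.mul_assoc]
  rw [TX, HX, expand_quad, e1, e2, e3, eR, expand_quad]
  abel

/-- Lemma 3.2(ii): if `R_≤ ∩ ℙ ≠ ∅`, then any `X_⋆ ∈ S_≥` has `R_{X_⋆}` positive definite and
`X_⋆ - R(X_⋆) ≥ K(X_T, X_⋆) ≥ 0`; in particular `X_⋆ ≥ R(X_⋆)`. -/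
theorem lemma_3_2_ii (n m : ℕ) (A : Matrix (Fin n) (Fin n) ℂ) (B : Matrix (Fin n) (Fin m) ℂ)
    (R : Matrix (Fin m) (Fin m) ℂ) (H : Matrix (Fin n) (Fin n) ℂ)
    (hR : R.IsHermitian) (hRunit : IsUnit R) (hH : H.IsHermitian)
    (hP : ∃ XP : Matrix (Fin n) (Fin n) ℂ, XP.IsHermitian ∧ (RX R B XP).PosDef ∧
      (Rop A B R H XP - XP).PosSemidef)
    (Xstar : Matrix (Fin n) (Fin n) ℂ) (hXstar : Xstar.IsHermitian)
    (XT : Matrix (Fin n) (Fin n) ℂ) (hXT : XT.IsHermitian) (hRXT : IsUnit (RX R B XT))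
    (hρT : spectralRadius ℂ (hatM (TX A B R XT)) < 1)
    (hineq : (CStein (TX A B R XT) Xstar - HX A B R H XT).PosSemidef) :
    (RX R B Xstar).PosDef ∧
    (Xstar - Rop A B R H Xstar - Kop A B R XT Xstar).PosSemidef ∧
    (Kop A B R XT Xstar).PosSemidef ∧
    (Xstar - Rop A B R H Xstar).PosSemidef := by
  obtain ⟨XP, hXPh, hRXP, hRopXP⟩ := hP
  set T := TX A B R XT with hT
  have hRXPu : IsUnit (RX R B XP) := hRXP.isUnit
  have id1 := key_identity A B R H XT XP hR hXPh hRXPu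
  have hK1 : ((FX A B R XT - FX A B R XP)ᴴ * RX R B XP *
      (FX A B R XT - FX A B R XP)).PosSemidef :=
    hRXP.posSemidef.conjTranspose_mul_mul_same _
  have h1eq : HX A B R H XT - CStein T XP
      = (Rop A B R H XP - XP) +
        (FX A B R XT - FX A B R XP)ᴴ * RX R B XP * (FX A B R XT - FX A B R XP) := by
    rw [CStein]
    calc HX A B R H XT - (XP - Tᴴ * mconj XP * T)
        = (Tᴴ * mconj XP * T + HX A B R H XT) - XP := by abel
      _ = (Rop A B R H XP + (FX A B R XT - FX A B R XP)ᴴ * RX R B XP *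
            (FX A B R XT - FX A B R XP)) - XP := by rw [id1]
      _ = _ := by abel
  have h1 : (HX A B R H XT - CStein T XP).PosSemidef := by
    rw [h1eq]; exact hRopXP.add hK1
  have h2 : (CStein T (Xstar - XP)).PosSemidef := by
    have e : CStein T (Xstar - XP) = (CStein T Xstar - HX A B R H XT)
        + (HX A B R H XT - CStein T XP) := by
      rw [CStein, CStein, CStein, mconj_sub, Matrix.mul_sub, Matrix.sub_mul]
      abel
    rw [e]; exact hineq.add h1
  have hΔ : (Xstar - XP).PosSemidef := by
    refine stein_lemma T (Xstar - XP) (hXstar.sub hXPh) hρT ?_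
    rw [CStein] at h2
    exact h2
  have hRXseq : RX R B Xstar = RX R B XP + Bᴴ * mconj (Xstar - XP) * B := by
    rw [RX, RX, mconj_sub, Matrix.mul_sub, Matrix.sub_mul]
    abel
  have hRXs : (RX R B Xstar).PosDef := by
    rw [hRXseq]
    exact hRXP.add_posSemidef ((mconj_posSemidef hΔ).conjTranspose_mul_mul_same B)
  have id2 := key_identity A B R H XT Xstar hR hXstar hRXs.isUnit
  have hKpsd : (Kop A B R XT Xstar).PosSemidef := by
    rw [Kop]
    exact hRXs.posSemidef.conjTranspose_mul_mul_same _
  have e2 : Xstar - Rop A B R H Xstar - Kop A B R XT Xstar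
      = CStein T Xstar - HX A B R H XT := by
    rw [Kop, CStein]
    calc Xstar - Rop A B R H Xstar - (FX A B R XT - FX A B R Xstar)ᴴ * RX R B Xstar *
          (FX A B R XT - FX A B R Xstar)
        = Xstar - (Rop A B R H Xstar + (FX A B R XT - FX A B R Xstar)ᴴ * RX R B Xstar *
          (FX A B R XT - FX A B R Xstar)) := by abel
      _ = Xstar - (Tᴴ * mconj Xstar * T + HX A B R H XT) := by rw [← id2]
      _ = Xstar - Tᴴ * mconj Xstar * T - HX A B R H XT := by abel
  have h3 : (Xstar - Rop A B R H Xstar - Kop A B R XT Xstar).PosSemidef := by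
    rw [e2]; exact hineq
  refine ⟨hRXs, h3, hKpsd, ?_⟩
  have e4 : Xstar - Rop A B R H Xstar =
      (Xstar - Rop A B R H Xstar - Kop A B R XT Xstar) + Kop A B R XT Xstar := by abel
  rw [e4]; exact h3.add hKpsd


end CDARE
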